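/- Define f(x) := π/4 − (1/2)·arcsin(1 − x) − (1/2)·(1 − x)·√(2x − x²) − (2x/(3·√5))·√(10x − 3x²). Then f is strictly decreasing on [0,1]; in particular its derivative satisfies f'(x) = √(2x − x²) − 2x(5 − 2x)/(√5·√(10x − 3x²)) < 0 for 0 < x < 1. -/

import Mathlib

open Real

lemma ac_deriv (x : ℝ) (hx0 : 0 < x) (hx1 : x < 1) :
    HasDerivAt (fun x : ℝ =>
        Real.pi / 4 - (1 / 2) * Real.arcsin (1 - x)
          - (1 / 2) * (1 - x) * Real.sqrt (2 * x - x ^ 2)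
          - (2 * x / (3 * Real.sqrt 5)) * Real.sqrt (10 * x - 3 * x ^ 2))
        (Real.sqrt (2 * x - x ^ 2)
          - 2 * x * (5 - 2 * x) / (Real.sqrt 5 * Real.sqrt (10 * x - 3 * x ^ 2))) x := by
  have h1 : (0:ℝ) < 2 * x - x ^ 2 := by nlinarith
  have h2 : (0:ℝ) < 10 * x - 3 * x ^ 2 := by nlinarith
  set s := Real.sqrt (2 * x - x ^ 2) with hs_def
  set t := Real.sqrt (10 * x - 3 * x ^ 2) with ht_def
  set r := Real.sqrt 5 with hr_def
  have hs : 0 < s := Real.sqrt_pos.2 h1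
  have ht : 0 < t := Real.sqrt_pos.2 h2
  have hr : 0 < r := Real.sqrt_pos.2 (by norm_num)
  have hs2 : s ^ 2 = 2 * x - x ^ 2 := Real.sq_sqrt h1.le
  have ht2 : t ^ 2 = 10 * x - 3 * x ^ 2 := Real.sq_sqrt h2.le
  have hr2 : r ^ 2 = 5 := Real.sq_sqrt (by norm_num)
  -- inner functions
  have hq : HasDerivAt (fun x : ℝ => 2 * x - x ^ 2) (2 - 2 * x) x := by
    have := ((hasDerivAt_id x).const_mul 2).sub (hasDerivAt_pow 2 x)
    exact this.congr_deriv (by norm_num)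
  have hq2 : HasDerivAt (fun x : ℝ => 10 * x - 3 * x ^ 2) (10 - 6 * x) x := by
    have := ((hasDerivAt_id x).const_mul 10).sub ((hasDerivAt_pow 2 x).const_mul 3)
    norm_num at this
    refine this.congr_deriv ?_
    ring
  have hsq : HasDerivAt (fun x : ℝ => Real.sqrt (2 * x - x ^ 2)) ((2 - 2 * x) / (2 * s)) x :=
    hq.sqrt h1.ne'
  have htq : HasDerivAt (fun x : ℝ => Real.sqrt (10 * x - 3 * x ^ 2)) ((10 - 6 * x) / (2 * t)) x :=
    hq2.sqrt h2.ne'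
  have hin : HasDerivAt (fun x : ℝ => 1 - x) (-1) x := by
    simpa using (hasDerivAt_id x).const_sub 1
  have ha : HasDerivAt (fun x : ℝ => Real.arcsin (1 - x)) (1 / Real.sqrt (1 - (1 - x) ^ 2) * (-1)) x :=
    (Real.hasDerivAt_arcsin (by nlinarith) (by nlinarith)).comp x hin
  have ha' : HasDerivAt (fun x : ℝ => Real.arcsin (1 - x)) (-(1 / s)) x := by
    have e : 1 - (1 - x) ^ 2 = 2 * x - x ^ 2 := by ring
    rw [e] at ha
    simpa using ha
  have hA : HasDerivAt (fun x : ℝ => (1 / 2 : ℝ) * Real.arcsin (1 - x)) ((1/2) * (-(1/s))) x :=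
    ha'.const_mul _
  have hc : HasDerivAt (fun x : ℝ => (1 / 2 : ℝ) * (1 - x)) (-(1/2)) x := by
    have := hin.const_mul (1/2 : ℝ)
    simpa using this
  have hB : HasDerivAt (fun x : ℝ => (1 / 2 : ℝ) * (1 - x) * Real.sqrt (2 * x - x ^ 2))
      ((-(1/2)) * s + (1/2) * (1 - x) * ((2 - 2*x)/(2*s))) x := hc.mul hsq
  have hc2 : HasDerivAt (fun x : ℝ => 2 * x / (3 * r)) (2 / (3 * r)) x := by
    have := ((hasDerivAt_id x).const_mul 2).div_const (3 * r)
    simpa [mul_div_assoc] using this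
  have hC : HasDerivAt (fun x : ℝ => (2 * x / (3 * r)) * Real.sqrt (10 * x - 3 * x ^ 2))
      ((2 / (3 * r)) * t + (2 * x / (3 * r)) * ((10 - 6*x)/(2*t))) x := hc2.mul htq
  have H := (((hasDerivAt_const x (Real.pi / 4)).sub hA).sub hB).sub hC
  refine H.congr_deriv (Eq.symm ?_)
  have e1 : 0 - (1/2) * (-(1/s)) - ((-(1/2 : ℝ)) * s + (1/2) * (1 - x) * ((2 - 2*x)/(2*s))) = s := by
    field_simp
    linear_combination (-1) * hs2
  have e2 : (2 / (3 * r)) * t + (2 * x / (3 * r)) * ((10 - 6*x)/(2*t)) = 2 * x * (5 - 2*x) / (r * t) := by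
    field_simp
    linear_combination 2 * ht2
  linear_combination e2 - e1

lemma ac_neg (x : ℝ) (hx0 : 0 < x) (hx1 : x < 1) :
    Real.sqrt (2 * x - x ^ 2)
        - 2 * x * (5 - 2 * x) / (Real.sqrt 5 * Real.sqrt (10 * x - 3 * x ^ 2)) < 0 := by
  have h1 : (0:ℝ) < 2 * x - x ^ 2 := by nlinarith
  have h2 : (0:ℝ) < 10 * x - 3 * x ^ 2 := by nlinarith
  set s := Real.sqrt (2 * x - x ^ 2) with hs_def
  set t := Real.sqrt (10 * x - 3 * x ^ 2) with ht_def
  set r := Real.sqrt 5 with hr_def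
  have hs : 0 < s := Real.sqrt_pos.2 h1
  have ht : 0 < t := Real.sqrt_pos.2 h2
  have hr : 0 < r := Real.sqrt_pos.2 (by norm_num)
  have hs2 : s ^ 2 = 2 * x - x ^ 2 := Real.sq_sqrt h1.le
  have ht2 : t ^ 2 = 10 * x - 3 * x ^ 2 := Real.sq_sqrt h2.le
  have hr2 : r ^ 2 = 5 := Real.sq_sqrt (by norm_num)
  rw [sub_neg, lt_div_iff₀ (by positivity)]
  have ha2 : (s*(r*t))^2 = 5*(2*x-x^2)*(10*x-3*x^2) := by
    rw [mul_pow, mul_pow, hs2, ht2, hr2]; ring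
  have hlt : 5*(2*x-x^2)*(10*x-3*x^2) < (2*x*(5-2*x))^2 := by nlinarith [pow_pos hx0 4]
  exact lt_of_pow_lt_pow_left₀ 2 (by nlinarith) (by rw [ha2]; exact hlt)

theorem area_comparison_strict_anti :
    StrictAntiOn (fun x : ℝ =>
      Real.pi / 4 - (1 / 2) * Real.arcsin (1 - x)
        - (1 / 2) * (1 - x) * Real.sqrt (2 * x - x ^ 2)
        - (2 * x / (3 * Real.sqrt 5)) * Real.sqrt (10 * x - 3 * x ^ 2))
      (Set.Icc 0 1) ∧
    ∀ x : ℝ, 0 < x → x < 1 →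
      HasDerivAt (fun x : ℝ =>
        Real.pi / 4 - (1 / 2) * Real.arcsin (1 - x)
          - (1 / 2) * (1 - x) * Real.sqrt (2 * x - x ^ 2)
          - (2 * x / (3 * Real.sqrt 5)) * Real.sqrt (10 * x - 3 * x ^ 2))
        (Real.sqrt (2 * x - x ^ 2)
          - 2 * x * (5 - 2 * x) / (Real.sqrt 5 * Real.sqrt (10 * x - 3 * x ^ 2))) x ∧
      Real.sqrt (2 * x - x ^ 2)
        - 2 * x * (5 - 2 * x) / (Real.sqrt 5 * Real.sqrt (10 * x - 3 * x ^ 2)) < 0 := by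
  constructor
  · apply strictAntiOn_of_deriv_neg (convex_Icc 0 1)
    · apply Continuous.continuousOn
      continuity
    · intro x hx
      rw [interior_Icc] at hx
      rw [(ac_deriv x hx.1 hx.2).deriv]
      exact ac_neg x hx.1 hx.2
  · intro x hx0 hx1
    exact ⟨ac_deriv x hx0 hx1, ac_neg x hx0 hx1⟩
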